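/- Let F be a linear ordered field equipped with its order topology, X a completely F-regular space, and A(X,F) an intermediate ring. If I is a proper z°-ideal of A(X,F), then there exists an ideal 𝒫 of closed sets in X such that I = {f ∈ A(X,F) : cl_X(X \ Z(f)) ∈ 𝒫}. -/

import Mathlib

open Set

/-- `Pz a` : the intersection of all minimal prime ideals of `R` which contain `a`. -/
def Pz {R : Type*} [CommRing R] (a : R) : Set R :=
  ⋂ P ∈ {P : Ideal R | P ∈ minimalPrimes R ∧ a ∈ P}, (P : Set R)

/-- A proper ideal `I` is a `z°`-ideal if `Pz a ⊆ I` for every `a ∈ I`. -/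
def IsZoIdeal {R : Type*} [CommRing R] (I : Ideal R) : Prop :=
  I ≠ ⊤ ∧ ∀ a ∈ I, Pz a ⊆ (I : Set R)

/-- The zero set `Z(f)` of a continuous function `f`. -/
def ZSet {X F : Type*} [TopologicalSpace X] [TopologicalSpace F] [Zero F]
    (f : C(X, F)) : Set X := {x | f x = 0}

/-- `f` is bounded over `X` (i.e. `f ∈ B(X,F)`). -/
def BddF {X F : Type*} [TopologicalSpace X] [Field F] [LinearOrder F] [IsStrictOrderedRing F] [TopologicalSpace F]
    (f : C(X, F)) : Prop := ∃ l : F, 0 < l ∧ ∀ x, |f x| ≤ l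

/-- `X` is completely `F`-regular: Hausdorff, and points can be separated from closed
sets by bounded `F`-valued continuous functions. -/
def CompletelyFRegular (X F : Type*) [TopologicalSpace X] [Field F] [LinearOrder F] [IsStrictOrderedRing F]
    [TopologicalSpace F] : Prop :=
  T2Space X ∧ ∀ K : Set X, IsClosed K → ∀ x ∉ K, ∃ f : C(X, F),
    BddF f ∧ f x = 0 ∧ ∀ k ∈ K, f k = 1

/-- `A` is an intermediate ring: a subring of `C(X,F)` containing all of `B(X,F)`. -/
def IsIntermediate {X F : Type*} [TopologicalSpace X] [Field F] [LinearOrder F] [IsStrictOrderedRing F]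
    [TopologicalSpace F] [OrderTopology F] (A : Subring C(X, F)) : Prop :=
  ∀ f : C(X, F), BddF f → f ∈ A

/-- An ideal of closed sets in `X`: a nonempty family of closed sets, closed under
finite unions and under passing to closed subsets. -/
def IsIdealOfClosedSets {X : Type*} [TopologicalSpace X] (P : Set (Set X)) : Prop :=
  P.Nonempty ∧ (∀ A ∈ P, IsClosed A) ∧ (∀ A ∈ P, ∀ B ∈ P, A ∪ B ∈ P) ∧
    ∀ C : Set X, IsClosed C → ∀ A ∈ P, C ⊆ A → C ∈ P

/-- `X` is an almost `P_F`-space: every nonempty zero set has nonempty interior. -/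
def AlmostPF (X F : Type*) [TopologicalSpace X] [Field F] [LinearOrder F] [IsStrictOrderedRing F]
    [TopologicalSpace F] : Prop :=
  ∀ f : C(X, F), (ZSet f).Nonempty → (interior (ZSet f)).Nonempty


private lemma key_minprime {R : Type*} [CommRing R] {P : Ideal R} (hP : P ∈ minimalPrimes R)
    {a : R} (ha : a ∈ P) : ∃ b, b ∉ P ∧ IsNilpotent (a * b) := by
  haveI hPp : P.IsPrime := hP.1.1
  have hmem : algebraMap R (Localization P.primeCompl) a ∈
      IsLocalRing.maximalIdeal (Localization P.primeCompl) :=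
    (IsLocalization.AtPrime.to_map_mem_maximal_iff (Localization P.primeCompl) P a).mpr ha
  obtain ⟨n, hn⟩ : IsNilpotent (algebraMap R (Localization P.primeCompl) a) := by
    have h := IsLocalization.AtPrime.radical_map_of_mem_minimalPrimes
      (A := Localization P.primeCompl) P ⊥ hP
    rw [Ideal.map_bot, IsLocalization.AtPrime.map_eq_maximalIdeal] at h
    rw [← h] at hmem
    obtain ⟨n, hn⟩ := hmem
    exact ⟨n, by simpa using hn⟩
  rw [← map_pow] at hn
  rw [IsLocalization.map_eq_zero_iff P.primeCompl] at hn
  obtain ⟨⟨s, hs⟩, hsa⟩ := hn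
  have hsP : s ∉ P := hs
  cases n with
  | zero =>
    simp only [pow_zero, mul_one] at hsa
    exact absurd (hsa ▸ P.zero_mem) hsP
  | succ m =>
    refine ⟨s, hsP, ⟨m + 1, ?_⟩⟩
    have : (a * s) ^ (m + 1) = s ^ m * (s * a ^ (m + 1)) := by ring
    rw [this, hsa, mul_zero]

/-- evaluation ring hom from the subring -/
private noncomputable def evalA {X F : Type*} [TopologicalSpace X] [Field F] [LinearOrder F] [IsStrictOrderedRing F]
    [TopologicalSpace F] [OrderTopology F] (A : Subring C(X, F)) (x : X) : A →+* F :=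
  (Pi.evalRingHom (fun _ : X => F) x).comp (ContinuousMap.coeFnRingHom.comp A.subtype)

private lemma mem_prime_of_closure_subset {X F : Type*} [TopologicalSpace X]
    [Field F] [LinearOrder F] [IsStrictOrderedRing F] [TopologicalSpace F] [OrderTopology F] {A : Subring C(X, F)}
    {f g : A}
    (hsub : closure ((ZSet (f : C(X, F)))ᶜ) ⊆ closure ((ZSet (g : C(X, F)))ᶜ))
    {Q : Ideal A} (hQ : Q ∈ minimalPrimes A) (hg : g ∈ Q) : f ∈ Q := by
  haveI : Q.IsPrime := hQ.1.1
  obtain ⟨h, hh, hnil⟩ := key_minprime hQ hg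
  have hpt : ∀ x : X, (g : C(X, F)) x * (h : C(X, F)) x = 0 := by
    intro x
    have h1 := hnil.map (evalA A x)
    rw [map_mul] at h1
    exact h1.eq_zero
  have hopen : IsOpen ((ZSet (h : C(X, F)))ᶜ) := by
    have : IsClosed (ZSet (h : C(X, F))) :=
      isClosed_eq (h : C(X, F)).continuous continuous_const
    exact this.isOpen_compl
  have hdisj : (ZSet (h : C(X, F)))ᶜ ∩ (ZSet (g : C(X, F)))ᶜ = ∅ := by
    apply eq_empty_iff_forall_notMem.mpr
    rintro x ⟨hx1, hx2⟩
    rcases mul_eq_zero.mp (hpt x) with h1 | h1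
    · exact hx2 h1
    · exact hx1 h1
  have hdisj' : (ZSet (h : C(X, F)))ᶜ ∩ closure ((ZSet (g : C(X, F)))ᶜ) = ∅ := by
    have := hopen.inter_closure (t := (ZSet (g : C(X, F)))ᶜ)
    rw [hdisj, closure_empty] at this
    exact subset_empty_iff.mp this
  have hfh : f * h = 0 := by
    apply Subtype.ext
    ext x
    show (f : C(X, F)) x * (h : C(X, F)) x = 0
    rcases eq_or_ne ((h : C(X, F)) x) 0 with h0 | h0
    · rw [h0, mul_zero]
    · have hx1 : x ∈ (ZSet (h : C(X, F)))ᶜ := h0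
      have hx2 : x ∉ closure ((ZSet (g : C(X, F)))ᶜ) := fun hc =>
        (eq_empty_iff_forall_notMem.mp hdisj' x) ⟨hx1, hc⟩
      have hx3 : x ∉ closure ((ZSet (f : C(X, F)))ᶜ) := fun hc => hx2 (hsub hc)
      have hf0 : (f : C(X, F)) x = 0 := by
        by_contra hfx
        exact hx3 (subset_closure hfx)
      rw [hf0, zero_mul]
  have hmem : f * h ∈ Q := hfh ▸ Q.zero_mem
  rcases Ideal.IsPrime.mem_or_mem ‹Q.IsPrime› hmem with hf | hh'
  · exact hf
  · exact absurd hh' hh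

/-- Every proper z°-ideal of an intermediate ring A(X,F) arises from an ideal of
closed sets in X. -/
theorem stmt3 {X F : Type*} [TopologicalSpace X] [Field F] [LinearOrder F] [IsStrictOrderedRing F]
    [TopologicalSpace F] [OrderTopology F]
    (hX : CompletelyFRegular X F)
    (A : Subring C(X, F)) (hA : IsIntermediate A)
    (I : Ideal A) (hI : IsZoIdeal I) :
    ∃ P : Set (Set X), IsIdealOfClosedSets P ∧
      (I : Set A) = {f : A | closure ((ZSet (f : C(X, F)))ᶜ) ∈ P} := by
  refine ⟨{C | IsClosed C ∧ ∃ g : A, g ∈ I ∧ C ⊆ closure ((ZSet (g : C(X, F)))ᶜ)},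
    ⟨⟨∅, isClosed_empty, 0, I.zero_mem, empty_subset _⟩, fun S hS => hS.1, ?_, ?_⟩, ?_⟩
  · -- closed under unions
    rintro S ⟨hSc, a, haI, hSa⟩ T ⟨hTc, b, hbI, hTb⟩
    refine ⟨hSc.union hTc, a * a + b * b,
      I.add_mem (I.mul_mem_left a haI) (I.mul_mem_left b hbI), ?_⟩
    have hz : (ZSet (((a * a + b * b : A) : C(X, F))))ᶜ =
        (ZSet (a : C(X, F)))ᶜ ∪ (ZSet (b : C(X, F)))ᶜ := by
      ext x
      simp only [ZSet, mem_compl_iff, mem_union, mem_setOf_eq, Subring.coe_add,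
        Subring.coe_mul, ContinuousMap.add_apply, ContinuousMap.mul_apply]
      rw [add_eq_zero_iff_of_nonneg (mul_self_nonneg _) (mul_self_nonneg _),
        mul_self_eq_zero, mul_self_eq_zero]
      tauto
    rw [hz, closure_union]
    exact union_subset (hSa.trans subset_union_left) (hTb.trans subset_union_right)
  · -- closed under closed subsets
    rintro C hC S ⟨hSc, g, hgI, hsub⟩ hCS
    exact ⟨hC, g, hgI, hCS.trans hsub⟩
  · -- the ideal equality
    ext f
    constructor
    · intro hf
      exact ⟨isClosed_closure, f, hf, subset_rfl⟩
    · rintro ⟨-, g, hgI, hsub⟩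
      refine hI.2 g hgI ?_
      refine mem_iInter₂.mpr ?_
      rintro Q ⟨hQmin, hgQ⟩
      exact mem_prime_of_closure_subset hsub hQmin hgQ
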